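/- Let 𝔉 be a saturated formation and let G be a finite group. If G has no non-trivial normal 𝔉-central subgroup (equivalently, Z_𝔉(G) = 1), then G^𝔉 is a large subgroup of G, i.e. C_G(G^𝔉) ≤ G^𝔉. -/

import Mathlib

/-- A class of finite groups. -/
def GroupClass : Type 1 :=
  ∀ (G : Type) [Group G] [Finite G], Prop

instance SemidirectProduct.instFinite {N G : Type*} [Group N] [Group G] [Finite N] [Finite G]
    (φ : G →* MulAut N) : Finite (N ⋊[φ] G) :=
  Finite.of_injective (fun x => (x.left, x.right)) (by
    rintro ⟨a, b⟩ ⟨c, d⟩ h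
    simpa [Prod.ext_iff, SemidirectProduct.ext_iff] using h)

/-- The `F`-residual of a finite group `G`. -/
def GroupClass.residual (F : GroupClass) (G : Type) [Group G] [Finite G] : Subgroup G :=
  sInf {N : Subgroup G | ∃ _ : N.Normal, F (G ⧸ N)}

/-- `F` is a formation. -/
structure GroupClass.IsFormation (F : GroupClass) : Prop where
  nonempty : ∃ (G : Type) (_ : Group G) (_ : Finite G), F G
  isoClosed : ∀ (G H : Type) [Group G] [Finite G] [Group H] [Finite H],
    (G ≃* H) → F G → F H
  quot_residual_mem : ∀ (G : Type) [Group G] [Finite G] (N : Subgroup G) (_ : N.Normal),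
    F.residual G ≤ N → F (G ⧸ N)

/-- `F` is hereditary (subgroup-closed). -/
def GroupClass.Hereditary (F : GroupClass) : Prop :=
  ∀ (G : Type) [Group G] [Finite G], F G → ∀ H : Subgroup G, F H

/-- `F` is saturated. -/
def GroupClass.Saturated (F : GroupClass) : Prop :=
  ∀ (G : Type) [Group G] [Finite G], F.residual G ≤ frattini G → F G

section SectionMachinery

variable {G : Type} [Group G]

/-- conjugation by `g` preserves `S.subgroupOf R` when `R, S` are normal. -/
theorem conj_map_subgroupOf (R S : Subgroup G) [hR : R.Normal] [hS : S.Normal] (g : G) :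
    (S.subgroupOf R).map ((MulAut.conjNormal g : MulAut R) : R →* R) = S.subgroupOf R := by
  ext x
  simp only [Subgroup.mem_map, Subgroup.mem_subgroupOf]
  constructor
  · rintro ⟨y, hy, rfl⟩
    simpa [MulAut.conjNormal_apply] using hS.conj_mem _ hy g
  · intro hx
    refine ⟨(MulAut.conjNormal g).symm x, ?_, by simp⟩
    simp only [Subgroup.mem_subgroupOf, MulAut.conjNormal_symm_apply]
    simpa using hS.conj_mem _ hx g⁻¹

/-- The conjugation action of `G` on the normal section `R/S`. -/
def secAction (R S : Subgroup G) [R.Normal] [S.Normal] :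
    G →* MulAut (R ⧸ S.subgroupOf R) where
  toFun g := QuotientGroup.congr (S.subgroupOf R) (S.subgroupOf R)
      (MulAut.conjNormal g) (conj_map_subgroupOf R S g)
  map_one' := by
    ext x
    induction x using QuotientGroup.induction_on with
    | H r => simp [QuotientGroup.congr_mk]
  map_mul' g₁ g₂ := by
    ext x
    induction x using QuotientGroup.induction_on with
    | H r => simp [QuotientGroup.congr_mk, map_mul]

/-- The centraliser in `G` of the normal section `R/S`. -/
def secCentralizer (R S : Subgroup G) [R.Normal] [S.Normal] : Subgroup G :=
  (secAction R S).ker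

instance secCentralizer.normal (R S : Subgroup G) [R.Normal] [S.Normal] :
    (secCentralizer R S).Normal := MonoidHom.normal_ker _

/-- The semidirect product `[R/S](G/K)` for a normal subgroup `K ≤ C_G(R/S)`. -/
abbrev secSDP (R S K : Subgroup G) [R.Normal] [S.Normal] [K.Normal]
    (hK : K ≤ secCentralizer R S) : Type :=
  (R ⧸ S.subgroupOf R) ⋊[QuotientGroup.lift K (secAction R S) (fun _ hx => hK hx)] (G ⧸ K)

end SectionMachinery

/-- The normal section `R/S` of `G` is `F`-central in `G`. -/
def FCentralSection (F : GroupClass) {G : Type} [Group G] [Finite G]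
    (R S : Subgroup G) [R.Normal] [S.Normal] : Prop :=
  ∃ (K : Subgroup G) (hK : K.Normal),
    haveI := hK
    ∃ hle : K ≤ secCentralizer R S, F (secSDP R S K hle)

/-- `H/K` is a chief factor of `G`. -/
def IsChiefFactor {G : Type} [Group G] (H K : Subgroup G) : Prop :=
  H.Normal ∧ K.Normal ∧ K < H ∧
    ∀ L : Subgroup G, L.Normal → K ≤ L → L ≤ H → L = K ∨ L = H

/-- A normal subgroup `N` of `G` is `F`-hypercentral in `G`:
every chief factor of `G` below `N` is `F`-central in `G`. -/
def FHypercentralIn (F : GroupClass) {G : Type} [Group G] [Finite G] (N : Subgroup G) : Prop :=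
  N.Normal ∧ ∀ H K : Subgroup G, ∀ hcf : IsChiefFactor H K, H ≤ N →
    @FCentralSection F G _ _ H K hcf.1 hcf.2.1

/-- The `F`-hypercentre of `G`: the product of all `F`-hypercentral normal subgroups. -/
def FHypercentre (F : GroupClass) (G : Type) [Group G] [Finite G] : Subgroup G :=
  ⨆ (N : Subgroup G) (_ : FHypercentralIn F N), N

/-- `A` is `K`-`F`-subnormal in `G`. -/
def KFSubnormalIn (F : GroupClass) {G : Type} [Group G] [Finite G] (A : Subgroup G) : Prop :=
  ∃ (n : ℕ) (c : ℕ → Subgroup G), c 0 = A ∧ c n = ⊤ ∧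
    ∀ i < n, c i ≤ c (i + 1) ∧
      (((c i).subgroupOf (c (i + 1))).Normal ∨
        F ((c (i + 1)) ⧸ ((c i).subgroupOf (c (i + 1))).normalCore))

/-! ### Auxiliary lemmas for Theorem B -/

section Aux

open Subgroup QuotientGroup SemidirectProduct

/-- The `F`-residual is a normal subgroup. -/
theorem residual_normal (F : GroupClass) (G : Type) [Group G] [Finite G] :
    (F.residual G).Normal := by
  constructor
  intro n hn g
  rw [GroupClass.residual, Subgroup.mem_sInf] at hn ⊢
  rintro H ⟨hHn, hFH⟩
  exact hHn.conj_mem n (hn H ⟨hHn, hFH⟩) g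

theorem GroupClass.IsFormation.residual_le_ker {F : GroupClass} (hF : F.IsFormation)
    {X W : Type} [Group X] [Finite X] [Group W] [Finite W] (f : X →* W)
    (hs : Function.Surjective f) (hW : F W) : F.residual X ≤ f.ker :=
  sInf_le ⟨f.normal_ker, hF.isoClosed W (X ⧸ f.ker)
    (QuotientGroup.quotientKerEquivOfSurjective f hs).symm hW⟩

theorem GroupClass.IsFormation.mem_of_residual_le_bot {F : GroupClass} (hF : F.IsFormation)
    {X : Type} [Group X] [Finite X] (h : F.residual X ≤ ⊥) : F X :=
  hF.isoClosed (X ⧸ (⊥ : Subgroup X)) X QuotientGroup.quotientBot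
    (hF.quot_residual_mem X ⊥ inferInstance h)

variable {G : Type} [Group G]

theorem secAction_apply_mk (R S : Subgroup G) [R.Normal] [S.Normal] (g : G) (r : R) :
    secAction R S g (QuotientGroup.mk r) = QuotientGroup.mk (MulAut.conjNormal g r) := by
  simp [secAction, QuotientGroup.congr_mk]

/-- `D` centralizes every normal section with lower term `D`. -/
theorem normal_le_secCentralizer_self (R D : Subgroup G) [R.Normal] [hD : D.Normal] :
    D ≤ secCentralizer R D := by
  intro d hd
  rw [secCentralizer, MonoidHom.mem_ker]
  refine MulEquiv.ext fun q => ?_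
  induction q using QuotientGroup.induction_on with
  | H r =>
    rw [secAction_apply_mk, MulAut.one_apply]
    rw [QuotientGroup.eq]
    rw [Subgroup.mem_subgroupOf]
    have h1 : ((((MulAut.conjNormal d r)⁻¹ * r : R) : G)) = d * (↑r)⁻¹ * d⁻¹ * ↑r := by
      push_cast [MulAut.conjNormal_apply]
      group
    rw [h1]
    have h2 : d * (↑r)⁻¹ * d⁻¹ * ↑r = d * ((↑r)⁻¹ * d⁻¹ * ((↑r)⁻¹)⁻¹) := by group
    rw [h2]
    exact mul_mem hd (hD.conj_mem _ (inv_mem hd) _)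

theorem centralizer_le_secCentralizer_bot (A : Subgroup G) [A.Normal] :
    Subgroup.centralizer (A : Set G) ≤ secCentralizer A ⊥ := by
  intro d hd
  rw [secCentralizer, MonoidHom.mem_ker]
  refine MulEquiv.ext fun q => ?_
  induction q using QuotientGroup.induction_on with
  | H a =>
    rw [secAction_apply_mk, MulAut.one_apply]
    congr 1
    ext
    rw [MulAut.conjNormal_apply]
    have := Subgroup.mem_centralizer_iff.mp hd ↑a a.2
    rw [mul_inv_eq_iff_eq_mul, this]

theorem le_centralizer_swap {A D : Subgroup G}
    (h : A ≤ Subgroup.centralizer (D : Set G)) :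
    D ≤ Subgroup.centralizer (A : Set G) := by
  intro d hd
  rw [Subgroup.mem_centralizer_iff]
  intro a ha
  exact (Subgroup.mem_centralizer_iff.mp (h ha) d hd).symm

end Aux

section KeyLemmas

open Subgroup QuotientGroup SemidirectProduct Pointwise

variable {G : Type} [Group G] [Finite G]

/-- If `G/D ∈ F` then the semidirect product `[R/D](G/D)` lies in `F`,
for any normal subgroups `R`, `D`. -/
theorem F_secSDP_quot {F : GroupClass} (hF : F.IsFormation)
    (R D : Subgroup G) [R.Normal] [hD : D.Normal] (hGD : F (G ⧸ D))
    (hle : D ≤ secCentralizer R D) :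
    F (secSDP R D D hle) := by
  have hcond : (D.subgroupOf R) ≤ ((QuotientGroup.mk' D).comp R.subtype).ker := by
    intro x hx
    rw [MonoidHom.mem_ker]
    rw [Subgroup.mem_subgroupOf] at hx
    simpa [QuotientGroup.eq_one_iff] using hx
  set f₁ : (R ⧸ D.subgroupOf R) →* (G ⧸ D) := QuotientGroup.lift _ _ hcond with hf₁
  have hcompat : ∀ x : G ⧸ D,
      f₁.comp ((QuotientGroup.lift D (secAction R D) (fun _ hx => hle hx) x).toMonoidHom)
        = (MulAut.conj ((MonoidHom.id (G ⧸ D)) x)).toMonoidHom.comp f₁ := by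
    intro x
    induction x using QuotientGroup.induction_on with
    | H g =>
      refine MonoidHom.ext fun q => ?_
      induction q using QuotientGroup.induction_on with
      | H r =>
        simp only [MonoidHom.comp_apply, MulEquiv.coe_toMonoidHom, MulAut.conj_apply,
          MonoidHom.id_apply, QuotientGroup.lift_mk, secAction_apply_mk, hf₁]
        erw [QuotientGroup.lift_mk]
        simp [MulAut.conjNormal_apply, QuotientGroup.mk_mul, QuotientGroup.mk_inv]
  set f : (secSDP R D D hle) →* (G ⧸ D) :=
    SemidirectProduct.lift f₁ (MonoidHom.id (G ⧸ D)) hcompat with hf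
  have hfsurj : Function.Surjective f := fun x => ⟨SemidirectProduct.inr x, by simp [hf]⟩
  have hres : F.residual (secSDP R D D hle) ≤ ⊥ := by
    have h1 := hF.residual_le_ker (f := (SemidirectProduct.rightHom :
      (secSDP R D D hle) →* (G ⧸ D))) SemidirectProduct.rightHom_surjective hGD
    have h2 := hF.residual_le_ker f hfsurj hGD
    intro y hy
    have hy1 := h1 hy
    have hy2 := h2 hy
    rw [MonoidHom.mem_ker] at hy1 hy2
    have hyr : y.right = 1 := hy1
    have hfy : f y = f₁ y.left * y.right := rfl
    rw [hyr, mul_one] at hfy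
    rw [hfy] at hy2
    obtain ⟨r, hr⟩ := QuotientGroup.mk_surjective y.left
    rw [← hr] at hy2
    rw [hf₁, QuotientGroup.lift_mk] at hy2
    simp only [MonoidHom.comp_apply, QuotientGroup.mk'_apply] at hy2
    rw [QuotientGroup.eq_one_iff] at hy2
    have hyl : y.left = 1 := by
      rw [← hr, QuotientGroup.eq_one_iff]
      rwa [Subgroup.mem_subgroupOf]
    rw [Subgroup.mem_bot, SemidirectProduct.ext_iff]
    exact ⟨hyl, hyr⟩
  exact hF.mem_of_residual_le_bot hres

/-- The key lemma: if `A` is a minimal normal subgroup subject to centralizing `D` and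
not being contained in `D`, then `[A](G/D) ∈ F`. -/
theorem keyFY (F : GroupClass) (hF : F.IsFormation) (hSat : F.Saturated)
    (D A : Subgroup G) [hD : D.Normal] [hA : A.Normal]
    (hGD : F (G ⧸ D))
    (hAC : A ≤ Subgroup.centralizer (D : Set G))
    (hmin : ∀ B : Subgroup G, B.Normal → B ≤ A → ¬ B ≤ D → B = A)
    (hAD : ¬ A ≤ D)
    (hle : D ≤ secCentralizer A ⊥) :
    F (secSDP A ⊥ D hle) := by
  set M : Subgroup G := A ⊔ D with hM
  have hleM : D ≤ secCentralizer M D := normal_le_secCentralizer_self M D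
  set Y' := secSDP M D D hleM with hY'
  have hFY' : F Y' := F_secSDP_quot hF M D hGD hleM
  -- the homomorphism j₁ between the quotients
  have hj₁cond : ((⊥ : Subgroup G).subgroupOf A) ≤
      (D.subgroupOf M).comap (Subgroup.inclusion (le_sup_left : A ≤ M)) := by
    intro x hx
    rw [Subgroup.mem_subgroupOf] at hx
    rw [Subgroup.mem_bot] at hx
    rw [Subgroup.mem_comap, Subgroup.mem_subgroupOf]
    simp only [Subgroup.coe_inclusion]
    rw [hx]
    exact one_mem D
  set j₁ : (A ⧸ ((⊥ : Subgroup G).subgroupOf A)) →* (M ⧸ D.subgroupOf M) :=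
    QuotientGroup.map _ _ (Subgroup.inclusion le_sup_left) hj₁cond with hj₁
  have hjcompat : ∀ x : G ⧸ D,
      j₁.comp ((QuotientGroup.lift D (secAction A ⊥) (fun _ hx => hle hx) x).toMonoidHom)
        = ((QuotientGroup.lift D (secAction M D) (fun _ hx => hleM hx)
            ((MonoidHom.id (G ⧸ D)) x)).toMonoidHom).comp j₁ := by
    intro x
    induction x using QuotientGroup.induction_on with
    | H g =>
      refine MonoidHom.ext fun q => ?_
      induction q using QuotientGroup.induction_on with
      | H a =>
        simp only [MonoidHom.comp_apply, MulEquiv.coe_toMonoidHom, MonoidHom.id_apply,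
          QuotientGroup.lift_mk, secAction_apply_mk, hj₁, QuotientGroup.map_mk]
        have hcomm' : (Subgroup.inclusion (le_sup_left : A ≤ M)) ((MulAut.conjNormal g) a)
            = (MulAut.conjNormal g) ((Subgroup.inclusion (le_sup_left : A ≤ M)) a) := by
          ext
          simp [MulAut.conjNormal_apply, Subgroup.coe_inclusion]
        erw [QuotientGroup.lift_mk (N := D), QuotientGroup.lift_mk (N := D)]
        simp only [secAction_apply_mk, QuotientGroup.map_mk]
        rw [hcomm']
  set j : (secSDP A ⊥ D hle) →* Y' :=
    SemidirectProduct.map j₁ (MonoidHom.id (G ⧸ D)) hjcompat with hj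
  set ι : A →* (secSDP A ⊥ D hle) :=
    SemidirectProduct.inl.comp (QuotientGroup.mk' ((⊥ : Subgroup G).subgroupOf A)) with hι
  have hιa : ∀ a : A, ι a = SemidirectProduct.inl (QuotientGroup.mk a) := fun a => rfl
  -- kernel of j
  have hkerj : ∀ y : secSDP A ⊥ D hle, y ∈ j.ker ↔ ∃ a : A, (↑a : G) ∈ D ∧ y = ι a := by
    intro y
    constructor
    · intro hy
      rw [MonoidHom.mem_ker] at hy
      have hyr : y.right = 1 := by
        have : (j y).right = (MonoidHom.id (G ⧸ D)) y.right := SemidirectProduct.map_right _ _ _ y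
        rw [hy] at this
        simpa using this.symm
      have hyl : j₁ y.left = 1 := by
        have : (j y).left = j₁ y.left := SemidirectProduct.map_left _ _ _ y
        rw [hy] at this
        simpa using this.symm
      obtain ⟨a, ha⟩ := QuotientGroup.mk_surjective y.left
      refine ⟨a, ?_, ?_⟩
      · rw [← ha, hj₁, QuotientGroup.map_mk, QuotientGroup.eq_one_iff,
          Subgroup.mem_subgroupOf] at hyl
        simpa using hyl
      · rw [hιa, SemidirectProduct.ext_iff]
        exact ⟨by simp [← ha], by simp [hyr]⟩
    · rintro ⟨a, haD, rfl⟩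
      rw [MonoidHom.mem_ker, hιa, hj, SemidirectProduct.map_inl]
      have : j₁ (QuotientGroup.mk a) = 1 := by
        rw [hj₁, QuotientGroup.map_mk, QuotientGroup.eq_one_iff, Subgroup.mem_subgroupOf]
        simpa using haD
      rw [this, map_one]
  -- j is surjective
  have hjsurj : Function.Surjective j := by
    intro y'
    obtain ⟨m, hm⟩ := QuotientGroup.mk_surjective y'.left
    have hmem : (↑m : G) ∈ ((A : Set G) * (D : Set G)) := by
      rw [← Subgroup.mul_normal A D]
      exact hM ▸ m.2
    obtain ⟨a, ha, d, hd, hprod⟩ := hmem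
    refine ⟨ι ⟨a, ha⟩ * SemidirectProduct.inr y'.right, ?_⟩
    rw [map_mul, hιa, hj, SemidirectProduct.map_inl, SemidirectProduct.map_inr]
    have hleft : j₁ (QuotientGroup.mk (⟨a, ha⟩ : A)) = y'.left := by
      rw [hj₁, QuotientGroup.map_mk, ← hm, QuotientGroup.eq]
      rw [Subgroup.mem_subgroupOf]
      have hd' : (↑(((Subgroup.inclusion (le_sup_left : A ≤ M)) ⟨a, ha⟩)⁻¹ * m) : G)
          = a⁻¹ * ↑m := by
        simp [Subgroup.coe_inclusion]
      rw [hd', ← hprod]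
      simpa [inv_mul_cancel_left] using hd
    rw [hleft]
    exact SemidirectProduct.inl_left_mul_inr_right y'
  have hRker : F.residual (secSDP A ⊥ D hle) ≤ j.ker := by
    apply sInf_le
    refine ⟨inferInstance, ?_⟩
    exact hF.isoClosed Y' _ (QuotientGroup.quotientKerEquivOfSurjective j hjsurj).symm hFY'
  -- conjugation formula
  have hιconj : ∀ (g : G) (a : A),
      SemidirectProduct.inr (QuotientGroup.mk g : G ⧸ D) * ι a *
        (SemidirectProduct.inr (QuotientGroup.mk g : G ⧸ D))⁻¹
        = ι ⟨g * ↑a * g⁻¹, hA.conj_mem _ a.2 g⟩ := by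
    intro g a
    rw [hιa, hιa, ← map_inv, ← SemidirectProduct.inl_aut]
    congr 1
  -- the subgroup L = range inl
  set L : Subgroup (secSDP A ⊥ D hle) := (SemidirectProduct.inl :
    (A ⧸ ((⊥ : Subgroup G).subgroupOf A)) →* (secSDP A ⊥ D hle)).range with hL
  haveI hLnorm : L.Normal := by
    rw [hL, SemidirectProduct.range_inl_eq_ker_rightHom]
    exact MonoidHom.normal_ker _
  have hkerL : j.ker ≤ L := by
    intro y hy
    obtain ⟨a, _, rfl⟩ := (hkerj y).mp hy
    exact ⟨_, rfl⟩
  have hcomm : ∀ y ∈ j.ker, ∀ z ∈ L, y * z = z * y := by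
    intro y hy z hz
    obtain ⟨a, haD, rfl⟩ := (hkerj y).mp hy
    obtain ⟨q, rfl⟩ := hz
    obtain ⟨b, rfl⟩ := QuotientGroup.mk_surjective q
    rw [hιa, ← map_mul, ← map_mul]
    congr 1
    rw [← QuotientGroup.mk_mul, ← QuotientGroup.mk_mul]
    congr 1
    ext
    exact Subgroup.mem_centralizer_iff.mp (hAC b.2) ↑a haD
  -- main saturation argument
  apply hSat
  rw [frattini, Order.radical]
  refine le_iInf₂ fun U hU => ?_
  by_contra hRU
  exfalso
  -- j.ker ⊔ U = ⊤
  have hkU : j.ker ⊔ U = ⊤ := by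
    rcases lt_or_eq_of_le (le_sup_right : U ≤ j.ker ⊔ U) with hlt | heq
    · exact hU.2 _ hlt
    · exfalso
      exact hRU (le_trans hRker (le_trans le_sup_left heq.symm.le))
  -- L ⊓ U is normal
  haveI hAUn : (L ⊓ U).Normal := by
    rw [← Subgroup.normalizer_eq_top_iff, eq_top_iff]
    intro y _
    have hy : y ∈ j.ker ⊔ U := hkU ▸ Subgroup.mem_top y
    rw [← SetLike.mem_coe, Subgroup.normal_mul] at hy
    obtain ⟨r, hr', u, hu', rfl⟩ := hy
    have hr : r ∈ j.ker := hr'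
    have hu : u ∈ U := hu'
    refine mul_mem ?_ ?_
    · -- r centralizes L, hence normalizes L ⊓ U
      rw [Subgroup.mem_normalizer_iff]
      intro h
      rw [Subgroup.mem_inf, Subgroup.mem_inf]
      constructor
      · rintro ⟨hhL, hhU⟩
        have hre : r * h * r⁻¹ = h := by
          rw [hcomm r hr h hhL, mul_inv_cancel_right]
        constructor
        · rw [hre]; exact hhL
        · rw [hre]; exact hhU
      · rintro ⟨hhL, hhU⟩
        have h2 := hcomm r⁻¹ (inv_mem hr) _ hhL
        have h3 : r * h * r⁻¹ = h := by
          have h4 : r⁻¹ * (r * h * r⁻¹) * r = h := by group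
          conv_rhs => rw [← h4]
          rw [h2, inv_mul_cancel_right]
        constructor
        · rw [← h3]; exact hhL
        · rw [← h3]; exact hhU
    · -- u ∈ U normalizes L ⊓ U
      rw [Subgroup.mem_normalizer_iff]
      intro h
      rw [Subgroup.mem_inf, Subgroup.mem_inf]
      constructor
      · rintro ⟨hhL, hhU⟩
        exact ⟨hLnorm.conj_mem h hhL u, mul_mem (mul_mem hu hhU) (inv_mem hu)⟩
      · rintro ⟨hhL, hhU⟩
        have h5 : u⁻¹ * (u * h * u⁻¹) * u⁻¹⁻¹ ∈ L := hLnorm.conj_mem _ hhL u⁻¹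
        have h6 : u⁻¹ * (u * h * u⁻¹) * u⁻¹⁻¹ = h := by group
        have h7 : u⁻¹ * (u * h * u⁻¹) * u ∈ U := mul_mem (mul_mem (inv_mem hu) hhU) hu
        have h8 : u⁻¹ * (u * h * u⁻¹) * u = h := by group
        exact ⟨h6 ▸ h5, h8 ▸ h7⟩
  -- the subgroup B of G
  set B : Subgroup G := Subgroup.map A.subtype (Subgroup.comap ι U) with hB
  have hBA : B ≤ A := by
    rintro b ⟨a, _, rfl⟩
    exact a.2
  have hBnormal : B.Normal := by
    constructor
    intro n hn g
    obtain ⟨a, haU, rfl⟩ := hn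
    have haU' : ι a ∈ U := haU
    refine Subgroup.mem_map.mpr ⟨⟨g * ↑a * g⁻¹, hA.conj_mem _ a.2 g⟩,
      Subgroup.mem_comap.mpr ?_, ?_⟩
    · rw [← hιconj g a]
      have h1 : ι a ∈ L ⊓ U := Subgroup.mem_inf.mpr ⟨⟨_, rfl⟩, haU'⟩
      exact (Subgroup.mem_inf.mp
        (hAUn.conj_mem _ h1 (SemidirectProduct.inr (QuotientGroup.mk g)))).2
    · rfl
  have hBD : B ≤ D := by
    by_contra hBD'
    have hBeq : B = A := hmin B hBnormal hBA hBD'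
    have hLU : L ≤ U := by
      intro z hz
      obtain ⟨q, hq⟩ := hz
      obtain ⟨a, ha⟩ := QuotientGroup.mk_surjective q
      have haB : (↑a : G) ∈ B := by rw [hBeq]; exact a.2
      obtain ⟨a', ha', haa⟩ := haB
      have heqa : a' = a := Subtype.ext haa
      rw [heqa] at ha'
      have : ι a ∈ U := ha'
      rw [hιa, ha, hq] at this
      exact this
    exact hRU (le_trans hRker (le_trans hkerL hLU))
  -- conclude A ≤ D, contradiction
  apply hAD
  intro a haA
  have hmem : ι ⟨a, haA⟩ ∈ j.ker ⊔ U := hkU ▸ Subgroup.mem_top _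
  rw [← SetLike.mem_coe, Subgroup.normal_mul] at hmem
  obtain ⟨r, hr, u, hu, heq⟩ := hmem
  obtain ⟨z, hzD, rfl⟩ := (hkerj r).mp hr
  have hu' : ι (z⁻¹ * ⟨a, haA⟩) ∈ U := by
    have : ι (z⁻¹ * ⟨a, haA⟩) = (ι z)⁻¹ * ι ⟨a, haA⟩ := by
      rw [map_mul, map_inv]
    rw [this, ← heq]
    have : (ι z)⁻¹ * (ι z * u) = u := by group
    rw [this]
    exact hu
  have hmemB : (↑(z⁻¹ * ⟨a, haA⟩) : G) ∈ B := ⟨_, Subgroup.mem_comap.mpr hu', rfl⟩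
  have hzd : (↑z)⁻¹ * a ∈ D := by
    have := hBD hmemB
    simpa using this
  have hfin : a = ↑z * ((↑z)⁻¹ * a) := by group
  rw [hfin]
  exact mul_mem hzD hzd

end KeyLemmas

/-- **Theorem B.** Let `𝔉` be a saturated formation. If the finite group `G` has no
non-trivial normal `𝔉`-central subgroup then `G^𝔉` is a large subgroup of `G`,
i.e. `C_G(G^𝔉) ≤ G^𝔉`. -/
theorem centralizer_residual_le_of_no_FCentral
    (F : GroupClass) (hF : F.IsFormation) (hSat : F.Saturated)
    {G : Type} [Group G] [Finite G]
    (hZ : ∀ N : Subgroup G, ∀ hN : N.Normal,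
      @FCentralSection F G _ _ N ⊥ hN inferInstance → N = ⊥) :
    Subgroup.centralizer ((F.residual G : Subgroup G) : Set G) ≤ F.residual G := by
  haveI hDnorm : (F.residual G).Normal := residual_normal F G
  set D : Subgroup G := F.residual G with hD
  set C : Subgroup G := Subgroup.centralizer (D : Set G) with hC
  intro x hxC
  by_contra hxD
  -- C is normal
  haveI hCnorm : C.Normal := by
    constructor
    intro n hn g
    rw [hC, Subgroup.mem_centralizer_iff] at hn ⊢
    intro h hh
    have hconj : g⁻¹ * h * g ∈ D := by
      have := hDnorm.conj_mem h hh g⁻¹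
      simpa using this
    have key := hn (g⁻¹ * h * g) hconj
    calc h * (g * n * g⁻¹) = g * ((g⁻¹ * h * g) * n) * g⁻¹ := by group
      _ = g * (n * (g⁻¹ * h * g)) * g⁻¹ := by rw [key]
      _ = g * n * g⁻¹ * h := by group
  have hCD : ¬ C ≤ D := fun h => hxD (h hxC)
  -- pick a normal subgroup A ≤ C of minimal cardinality with A ⊄ D
  set S : Set ℕ := {n | ∃ A : Subgroup G, (A.Normal ∧ A ≤ C ∧ ¬ A ≤ D) ∧ Nat.card A = n}
    with hS
  have hSne : S.Nonempty := ⟨Nat.card C, C, ⟨hCnorm, le_rfl, hCD⟩, rfl⟩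
  obtain ⟨A, ⟨hAnorm, hAC, hAD⟩, hcard⟩ := Nat.sInf_mem hSne
  haveI := hAnorm
  have hmin : ∀ B : Subgroup G, B.Normal → B ≤ A → ¬ B ≤ D → B = A := by
    intro B h1 h2 h3
    have hle : sInf S ≤ Nat.card B := Nat.sInf_le ⟨B, ⟨h1, h2.trans hAC, h3⟩, rfl⟩
    rw [← hcard] at hle
    exact Subgroup.eq_of_le_of_card_ge h2 hle
  -- D ≤ secCentralizer A ⊥
  have hle : D ≤ secCentralizer A ⊥ :=
    (le_centralizer_swap hAC).trans (centralizer_le_secCentralizer_bot A)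
  have hGD : F (G ⧸ D) := hF.quot_residual_mem G D hDnorm le_rfl
  have hFY : F (secSDP A ⊥ D hle) := keyFY F hF hSat D A hGD hAC hmin hAD hle
  have hFC : @FCentralSection F G _ _ A ⊥ hAnorm inferInstance :=
    ⟨D, hDnorm, hle, hFY⟩
  have : A = ⊥ := hZ A hAnorm hFC
  apply hAD
  rw [this]
  exact bot_le
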